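/- Let t be an SL₂-tiling. For all integers a ≤ d, the value t(a,w)·t(d,w+1) − t(a,w+1)·t(d,w) is independent of the integer w, i.e. for all integers w, w' one has t(a,w)·t(d,w+1) − t(a,w+1)·t(d,w) = t(a,w')·t(d,w'+1) − t(a,w'+1)·t(d,w'). Similarly, for all integers u ≤ x and all integers c, c' one has t(c,u)·t(c+1,x) − t(c,x)·t(c+1,u) = t(c',u)·t(c'+1,x) − t(c',x)·t(c'+1,u). -/

import Mathlib

/-- An `SL₂`-tiling: all entries are `≥ 1` and every adjacent `2×2` minor is `1`. -/
def IsSL2Tiling (t : ℤ → ℤ → ℤ) : Prop :=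
  (∀ i j, 1 ≤ t i j) ∧
  (∀ i j, t i j * t (i+1) (j+1) - t i (j+1) * t (i+1) j = 1)

lemma const_of_step (g : ℤ → ℤ) (h : ∀ w : ℤ, g (w+1) = g w) : ∀ w w' : ℤ, g w = g w' := by
  have key : ∀ w : ℤ, g w = g 0 := by
    intro w
    induction w using Int.induction_on with
    | zero => rfl
    | succ k ih => rw [h, ih]
    | pred k ih =>
      have := h (-(k:ℤ) - 1)
      have e : (-(k:ℤ) - 1) + 1 = -(k:ℤ) := by ring
      rw [e] at this
      rw [← this]
      exact ih
  intro w w'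
  rw [key w, key w']

lemma cross_col (t : ℤ → ℤ → ℤ) (ht : IsSL2Tiling t) (w : ℤ) :
    ∀ a d : ℤ, a ≤ d →
      (t a w + t a (w+2)) * t d (w+1) = (t d w + t d (w+2)) * t a (w+1) := by
  intro a d had
  refine Int.le_induction (motive := fun d _ => (t a w + t a (w+2)) * t d (w+1) = (t d w + t d (w+2)) * t a (w+1)) ?_ ?_ d had
  · ring
  intro d hd ih
  have hv : t d (w+1) ≠ 0 := by have := ht.1 d (w+1); omega
  have h1 := ht.2 d w
  have h2 := ht.2 d (w+1)
  have e : w + 1 + 1 = w + 2 := by ring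
  rw [e] at h2
  have step : (t d w + t d (w+2)) * t (d+1) (w+1)
      = (t (d+1) w + t (d+1) (w+2)) * t d (w+1) := by
    linear_combination h1 - h2
  apply mul_left_cancel₀ hv
  linear_combination t (d+1) (w+1) * ih + t a (w+1) * step

lemma cross_row (t : ℤ → ℤ → ℤ) (ht : IsSL2Tiling t) (c : ℤ) :
    ∀ u x : ℤ, u ≤ x →
      (t c u + t (c+2) u) * t (c+1) x = (t c x + t (c+2) x) * t (c+1) u := by
  intro u x hux
  refine Int.le_induction (motive := fun x _ => (t c u + t (c+2) u) * t (c+1) x = (t c x + t (c+2) x) * t (c+1) u) ?_ ?_ x hux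
  · ring
  intro x hx ih
  have hv : t (c+1) x ≠ 0 := by have := ht.1 (c+1) x; omega
  have h1 := ht.2 c x
  have h2 := ht.2 (c+1) x
  have e : c + 1 + 1 = c + 2 := by ring
  rw [e] at h2
  have step : (t c x + t (c+2) x) * t (c+1) (x+1)
      = (t c (x+1) + t (c+2) (x+1)) * t (c+1) x := by
    linear_combination h1 - h2
  apply mul_left_cancel₀ hv
  linear_combination t (c+1) (x+1) * ih + t (c+1) u * step

theorem pq_well_defined (t : ℤ → ℤ → ℤ) (ht : IsSL2Tiling t) :
    (∀ a d : ℤ, a ≤ d → ∀ w w' : ℤ,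
      t a w * t d (w+1) - t a (w+1) * t d w =
        t a w' * t d (w'+1) - t a (w'+1) * t d w') ∧
    (∀ u x : ℤ, u ≤ x → ∀ c c' : ℤ,
      t c u * t (c+1) x - t c x * t (c+1) u =
        t c' u * t (c'+1) x - t c' x * t (c'+1) u) := by
  constructor
  · intro a d had
    apply const_of_step (fun w => t a w * t d (w+1) - t a (w+1) * t d w)
    intro w
    show t a (w+1) * t d (w+1+1) - t a (w+1+1) * t d (w+1) = _
    have h := cross_col t ht w a d had
    have e : w + 1 + 1 = w + 2 := by ring
    rw [e]
    linear_combination -h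
  · intro u x hux
    apply const_of_step (fun c => t c u * t (c+1) x - t c x * t (c+1) u)
    intro c
    show t (c+1) u * t (c+1+1) x - t (c+1) x * t (c+1+1) u = _
    have h := cross_row t ht c u x hux
    have e : c + 1 + 1 = c + 2 := by ring
    rw [e]
    linear_combination -h
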